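/- Let A be a deterministic Büchi Parikh automaton whose semi-linear set is a single linear set C(b, P) with base vector b = 0. Then the ω-language accepted by A under the Büchi condition equals the ω-language accepted by A under the weak reset condition. -/

import Mathlib

/-! Common definitions: semi-linear sets, Parikh automata on finite and infinite words. -/

/-- The linear set with base vector `b` and finite set `P` of period vectors. -/
def LinSet {d : ℕ} {M : Type} [AddCommMonoid M] (b : Fin d → M)
    (P : Finset (Fin d → M)) : Set (Fin d → M) :=
  {v | ∃ z : (Fin d → M) → ℕ, v = b + ∑ p ∈ P, z p • p}

/-- A set is semi-linear if it is a finite union of linear sets. -/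
def SemiLin {d : ℕ} {M : Type} [AddCommMonoid M] (S : Set (Fin d → M)) : Prop :=
  ∃ (n : ℕ) (b : Fin n → Fin d → M) (P : Fin n → Finset (Fin d → M)),
    S = ⋃ i, LinSet (b i) (P i)

/-- The length-`n` prefix of an infinite word. -/
def pref {S : Type} (α : ℕ → S) (n : ℕ) : List S := List.ofFn fun i : Fin n => α i.1

/-- An infinite word is ultimately periodic if it has the form `u v^ω`. -/
def UltimatelyPeriodic {S : Type} (α : ℕ → S) : Prop :=
  ∃ n p, 0 < p ∧ ∀ i, n ≤ i → α (i + p) = α i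

/-- The finite infix `α[m+1 : n]` (0-indexed positions `m, …, n-1`). -/
def infixSeg {S : Type} (α : ℕ → S) (m n : ℕ) : List S :=
  List.ofFn fun j : Fin (n - m) => α (m + j.1)

/-- `W^ω`: infinite concatenations of non-empty words from `W`. -/
def omegaPow {S : Type} (W : Set (List S)) : Set (ℕ → S) :=
  {α | ∃ k : ℕ → ℕ, k 0 = 0 ∧ StrictMono k ∧ ∀ i, infixSeg α (k i) (k (i + 1)) ∈ W}

/-- A deterministic Parikh automaton with states `Q`, alphabet `S`, dimension `d`,
and a constraint set `C` of vectors over `M` (`M = ℕ`, or `M = ℕ∞` for limit PA). -/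
structure DetPA (Q S : Type) (d : ℕ) (M : Type) where
  init : Q
  trans : Q → S → (Fin d → ℕ) × Q
  acc : Q → Prop
  C : Set (Fin d → M)

namespace DetPA

variable {Q S M : Type} {d : ℕ}

/-- The run of `A` from state `p` on the infinite word `α`: state after `i` letters. -/
def run (A : DetPA Q S d M) (p : Q) (α : ℕ → S) : ℕ → Q
  | 0 => p
  | i + 1 => (A.trans (A.run p α i) (α i)).2

/-- The state of the unique run of `A` on `α` after `i` letters. -/
def stateAt (A : DetPA Q S d M) (α : ℕ → S) : ℕ → Q := A.run A.init α

/-- The vector of the `i`-th transition of the unique run of `A` on `α`. -/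
def step (A : DetPA Q S d M) (α : ℕ → S) (i : ℕ) : Fin d → ℕ :=
  (A.trans (A.stateAt α i) (α i)).1

/-- Sum of transition vectors of the run of `A` on `α` on positions `m, …, n-1`. -/
def vecSum (A : DetPA Q S d M) (α : ℕ → S) (m n : ℕ) : Fin d → ℕ :=
  ∑ i ∈ Finset.Ico m n, A.step α i

/-- The state reached when reading a finite word from state `p`. -/
def runList (A : DetPA Q S d M) : Q → List S → Q
  | p, [] => p
  | p, a :: w => A.runList (A.trans p a).2 w

/-- The sum of transition vectors collected when reading a finite word from state `p`. -/
def sumList (A : DetPA Q S d M) : Q → List S → (Fin d → ℕ)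
  | _, [] => 0
  | p, a :: w => (A.trans p a).1 + A.sumList (A.trans p a).2 w

/-- Finite-word acceptance: end in an accepting state with vector sum in `C`. -/
def AcceptsWord (A : DetPA Q S d ℕ) (w : List S) : Prop :=
  A.acc (A.runList A.init w) ∧ A.sumList A.init w ∈ A.C

/-- The run visits accepting states infinitely often. -/
def InfAcc (A : DetPA Q S d M) (α : ℕ → S) : Prop :=
  ∀ n, ∃ i, n ≤ i ∧ A.acc (A.stateAt α i)

/-- Reachability condition. -/
def ReachAccept (A : DetPA Q S d ℕ) (α : ℕ → S) : Prop :=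
  ∃ i, 1 ≤ i ∧ A.acc (A.stateAt α i) ∧ A.vecSum α 0 i ∈ A.C

/-- Reachability-regular condition. -/
def ReachRegAccept (A : DetPA Q S d ℕ) (α : ℕ → S) : Prop :=
  A.ReachAccept α ∧ A.InfAcc α

/-- Büchi condition. -/
def BuchiAccept (A : DetPA Q S d ℕ) (α : ℕ → S) : Prop :=
  ∀ n, ∃ i, n ≤ i ∧ 1 ≤ i ∧ A.acc (A.stateAt α i) ∧ A.vecSum α 0 i ∈ A.C

/-- Weak reset condition. -/
def WeakResetAccept (A : DetPA Q S d ℕ) (α : ℕ → S) : Prop :=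
  ∃ k : ℕ → ℕ, k 0 = 0 ∧ StrictMono k ∧
    (∀ i, A.acc (A.stateAt α (k (i + 1)))) ∧
    (∀ i, A.vecSum α (k i) (k (i + 1)) ∈ A.C)

/-- Strong reset condition: accepting states occur infinitely often, and between any
two consecutive accepting positions (and from position `0` to the first one) the
collected vector lies in `C`. -/
def StrongResetAccept (A : DetPA Q S d ℕ) (α : ℕ → S) : Prop :=
  (∀ n, ∃ i, n ≤ i ∧ 1 ≤ i ∧ A.acc (A.stateAt α i)) ∧
  ∀ m n, m < n → (m = 0 ∨ (1 ≤ m ∧ A.acc (A.stateAt α m))) →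
    A.acc (A.stateAt α n) →
    (∀ j, m < j → j < n → ¬ A.acc (A.stateAt α j)) →
    A.vecSum α m n ∈ A.C

/-- The extended Parikh image of the unique run of `A` on `α`: componentwise the
supremum in `ℕ∞` of the partial sums (`∞` iff the component is incremented
infinitely often, else the finite total sum). -/
noncomputable def limImage (A : DetPA Q S d M) (α : ℕ → S) : Fin d → ℕ∞ :=
  fun j => ⨆ n, (A.vecSum α 0 n j : ℕ∞)

/-- Limit condition. -/
def LimitAccept (A : DetPA Q S d ℕ∞) (α : ℕ → S) : Prop :=
  A.InfAcc α ∧ A.limImage α ∈ A.C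

end DetPA

/-- `U` is recognized by a deterministic finite-word Parikh automaton. -/
def DetPARecogFin {S : Type} (U : Set (List S)) : Prop :=
  ∃ (d : ℕ) (Q : Type) (_ : Finite Q) (A : DetPA Q S d ℕ),
    SemiLin A.C ∧ U = {w | A.AcceptsWord w}

/-- `L` is recognized by a deterministic reachability PA. -/
def DetReachRecog {S : Type} (L : Set (ℕ → S)) : Prop :=
  ∃ (d : ℕ) (Q : Type) (_ : Finite Q) (A : DetPA Q S d ℕ),
    SemiLin A.C ∧ L = {α | A.ReachAccept α}

/-- `L` is recognized by a deterministic reachability-regular PA. -/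
def DetReachRegRecog {S : Type} (L : Set (ℕ → S)) : Prop :=
  ∃ (d : ℕ) (Q : Type) (_ : Finite Q) (A : DetPA Q S d ℕ),
    SemiLin A.C ∧ L = {α | A.ReachRegAccept α}

/-- `L` is recognized by a deterministic Büchi PA. -/
def DetBuchiRecog {S : Type} (L : Set (ℕ → S)) : Prop :=
  ∃ (d : ℕ) (Q : Type) (_ : Finite Q) (A : DetPA Q S d ℕ),
    SemiLin A.C ∧ L = {α | A.BuchiAccept α}

/-- `L` is recognized by a deterministic weak reset PA. -/
def DetWeakResetRecog {S : Type} (L : Set (ℕ → S)) : Prop :=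
  ∃ (d : ℕ) (Q : Type) (_ : Finite Q) (A : DetPA Q S d ℕ),
    SemiLin A.C ∧ L = {α | A.WeakResetAccept α}

/-- `L` is recognized by a deterministic strong reset PA. -/
def DetStrongResetRecog {S : Type} (L : Set (ℕ → S)) : Prop :=
  ∃ (d : ℕ) (Q : Type) (_ : Finite Q) (A : DetPA Q S d ℕ),
    SemiLin A.C ∧ L = {α | A.StrongResetAccept α}

/-- `L` is recognized by a deterministic limit PA (constraint set over `ℕ∞`). -/
def DetLimitRecog {S : Type} (L : Set (ℕ → S)) : Prop :=
  ∃ (d : ℕ) (Q : Type) (_ : Finite Q) (A : DetPA Q S d ℕ∞),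
    SemiLin A.C ∧ L = {α | A.LimitAccept α}

/-- A nondeterministic Parikh automaton. -/
structure NPA (Q S : Type) (d : ℕ) where
  init : Q
  trans : Q → S → (Fin d → ℕ) → Q → Prop
  acc : Q → Prop
  C : Set (Fin d → ℕ)

namespace NPA

variable {Q S : Type} {d : ℕ}

/-- `r, v` form a run of `A` on the infinite word `α`. -/
def IsRun (A : NPA Q S d) (α : ℕ → S) (r : ℕ → Q) (v : ℕ → Fin d → ℕ) : Prop :=
  r 0 = A.init ∧ ∀ i, A.trans (r i) (α i) (v i) (r (i + 1))

/-- Partial sums of the vectors of a run over positions `m, …, n-1`. -/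
def partSum (v : ℕ → Fin d → ℕ) (m n : ℕ) : Fin d → ℕ := ∑ i ∈ Finset.Ico m n, v i

/-- Nondeterministic reachability-regular acceptance. -/
def ReachRegAccept (A : NPA Q S d) (α : ℕ → S) : Prop :=
  ∃ r v, A.IsRun α r v ∧ (∃ i, 1 ≤ i ∧ A.acc (r i) ∧ partSum v 0 i ∈ A.C) ∧
    ∀ n, ∃ i, n ≤ i ∧ A.acc (r i)

/-- Nondeterministic strong reset acceptance. -/
def StrongResetAccept (A : NPA Q S d) (α : ℕ → S) : Prop :=
  ∃ r v, A.IsRun α r v ∧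
    (∀ n, ∃ i, n ≤ i ∧ 1 ≤ i ∧ A.acc (r i)) ∧
    ∀ m n, m < n → (m = 0 ∨ (1 ≤ m ∧ A.acc (r m))) → A.acc (r n) →
      (∀ j, m < j → j < n → ¬ A.acc (r j)) → partSum v m n ∈ A.C

/-- Nondeterministic weak reset acceptance. -/
def WeakResetAccept (A : NPA Q S d) (α : ℕ → S) : Prop :=
  ∃ r v, A.IsRun α r v ∧ ∃ k : ℕ → ℕ, k 0 = 0 ∧ StrictMono k ∧
    (∀ i, A.acc (r (k (i + 1)))) ∧ (∀ i, partSum v (k i) (k (i + 1)) ∈ A.C)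

/-- Runs of a nondeterministic PA on a finite word, from state `p` to state `q`
collecting vector sum `v`. -/
def ListRun (A : NPA Q S d) : Q → List S → (Fin d → ℕ) → Q → Prop
  | p, [], v, q => q = p ∧ v = 0
  | p, a :: w, v, q => ∃ u p', A.trans p a u p' ∧ ∃ v', A.ListRun p' w v' q ∧ v = u + v'

/-- Finite-word acceptance for a nondeterministic PA. -/
def AcceptsWord (A : NPA Q S d) (w : List S) : Prop :=
  ∃ v q, A.ListRun A.init w v q ∧ A.acc q ∧ v ∈ A.C

end NPA

/-- `L` is recognized by a (nondeterministic) reachability-regular PA. -/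
def NPAReachRegRecog {S : Type} (L : Set (ℕ → S)) : Prop :=
  ∃ (d : ℕ) (Q : Type) (_ : Finite Q) (A : NPA Q S d),
    SemiLin A.C ∧ L = {α | A.ReachRegAccept α}

/-- `L` is recognized by a (nondeterministic) strong reset PA. -/
def NPAStrongResetRecog {S : Type} (L : Set (ℕ → S)) : Prop :=
  ∃ (d : ℕ) (Q : Type) (_ : Finite Q) (A : NPA Q S d),
    SemiLin A.C ∧ L = {α | A.StrongResetAccept α}

/-- `L` is recognized by a (nondeterministic) weak reset PA. -/
def NPAWeakResetRecog {S : Type} (L : Set (ℕ → S)) : Prop :=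
  ∃ (d : ℕ) (Q : Type) (_ : Finite Q) (A : NPA Q S d),
    SemiLin A.C ∧ L = {α | A.WeakResetAccept α}

/-- A nondeterministic Büchi automaton. -/
structure NBA (Q S : Type) where
  init : Q
  trans : Q → S → Q → Prop
  acc : Q → Prop

/-- Büchi acceptance. -/
def NBA.Accepts {Q S : Type} (B : NBA Q S) (α : ℕ → S) : Prop :=
  ∃ r : ℕ → Q, r 0 = B.init ∧ (∀ i, B.trans (r i) (α i) (r (i + 1))) ∧
    ∀ n, ∃ i, n ≤ i ∧ B.acc (r i)

/-- `L` is ω-regular: recognized by a nondeterministic Büchi automaton. -/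
def OmegaRegular {S : Type} (L : Set (ℕ → S)) : Prop :=
  ∃ (Q : Type) (_ : Finite Q) (B : NBA Q S), L = {α | B.Accepts α}

section Aux

variable {Q S : Type} {d : ℕ}

lemma linSet_zero_mem {P : Finset (Fin d → ℕ)} : (0 : Fin d → ℕ) ∈ LinSet 0 P :=
  ⟨0, by simp⟩

lemma linSet_add_mem {P : Finset (Fin d → ℕ)} {a b : Fin d → ℕ}
    (ha : a ∈ LinSet 0 P) (hb : b ∈ LinSet 0 P) : a + b ∈ LinSet 0 P := by
  obtain ⟨z1, hz1⟩ := ha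
  obtain ⟨z2, hz2⟩ := hb
  refine ⟨z1 + z2, ?_⟩
  simp only [zero_add] at *
  rw [hz1, hz2, ← Finset.sum_add_distrib]
  congr 1; ext p; simp [add_smul, add_mul]

lemma vecSum_split (A : DetPA Q S d ℕ) (α : ℕ → S) {a b c : ℕ} (hab : a ≤ b) (hbc : b ≤ c) :
    A.vecSum α a b + A.vecSum α b c = A.vecSum α a c := by
  unfold DetPA.vecSum
  rw [Finset.sum_Ico_consecutive _ hab hbc]

end Aux

/-- for a deterministic Büchi PA whose constraint set is a single linear
set with base vector `0`, the Büchi and weak reset acceptance conditions coincide. -/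
theorem buchi_eq_weakReset_of_linear_zero_base {Q S : Type} [Finite Q] {d : ℕ}
    (A : DetPA Q S d ℕ) (P : Finset (Fin d → ℕ)) (hC : A.C = LinSet 0 P) :
    {α | A.BuchiAccept α} = {α | A.WeakResetAccept α} := by
  ext α
  simp only [Set.mem_setOf_eq]
  constructor
  · intro hB
    -- build a strictly increasing sequence of accepting positions
    obtain ⟨m, hm⟩ : ∃ m : ℕ → ℕ, ∀ j, (1 ≤ m j ∧ A.acc (A.stateAt α (m j)) ∧
        A.vecSum α 0 (m j) ∈ A.C) ∧ m j < m (j + 1) := by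
      have H : ∀ n : ℕ, ∃ i, n ≤ i ∧ 1 ≤ i ∧ A.acc (A.stateAt α i) ∧
          A.vecSum α 0 i ∈ A.C := hB
      choose f hf1 hf2 hf3 hf4 using H
      refine ⟨fun j => Nat.rec (f 1) (fun _ prev => f (prev + 1)) j, fun j => ?_⟩
      induction j with
      | zero => exact ⟨⟨hf2 1, hf3 1, hf4 1⟩, hf1 _⟩
      | succ j ih => exact ⟨⟨hf2 _, hf3 _, hf4 _⟩, hf1 _⟩
    have hmmono : StrictMono m := strictMono_nat_of_lt_succ fun j => (hm j).2
    -- extract coefficient vectors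
    have hmem : ∀ j, A.vecSum α 0 (m j) ∈ LinSet (0 : Fin d → ℕ) P := fun j => by
      rw [← hC]; exact (hm j).1.2.2
    choose z hz using hmem
    simp only [zero_add] at hz
    -- Dickson's lemma
    haveI : ∀ _ : ↥P, IsWellOrder ℕ (· < ·) := fun _ => inferInstance
    obtain ⟨g, hg⟩ := (Set.isPWO_of_wellQuasiOrderedLE (α := ↥P → ℕ) Set.univ).exists_monotone_subseq
      (f := fun j (p : ↥P) => z j p.1) (fun _ => Set.mem_univ _)
    -- the reset sequence
    refine ⟨fun i => Nat.rec 0 (fun i _ => m (g i)) i, rfl, ?_, ?_, ?_⟩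
    · apply strictMono_nat_of_lt_succ
      intro i
      cases i with
      | zero => exact (hm (g 0)).1.1
      | succ i => exact hmmono (g.strictMono (Nat.lt_succ_self i))
    · intro i; exact (hm (g i)).1.2.1
    · intro i
      rw [hC]
      cases i with
      | zero => exact ⟨z (g 0), by simpa using hz (g 0)⟩
      | succ i =>
        -- segment from m (g i) to m (g (i+1))
        have hle : ∀ p ∈ P, z (g i) p ≤ z (g (i + 1)) p := by
          intro p hp
          exact hg (Nat.le_succ i) ⟨p, hp⟩
        refine ⟨fun p => z (g (i + 1)) p - z (g i) p, ?_⟩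
        have hsum : A.vecSum α 0 (m (g i)) + A.vecSum α (m (g i)) (m (g (i + 1))) =
            A.vecSum α 0 (m (g (i + 1))) :=
          vecSum_split A α (Nat.zero_le _)
            (le_of_lt (hmmono (g.strictMono (Nat.lt_succ_self i))))
        have key : A.vecSum α 0 (m (g i)) +
            (0 + ∑ p ∈ P, (z (g (i + 1)) p - z (g i) p) • p) =
            A.vecSum α 0 (m (g i)) + A.vecSum α (m (g i)) (m (g (i + 1))) := by
          rw [hsum, hz (g i), hz (g (i + 1)), zero_add, ← Finset.sum_add_distrib]
          apply Finset.sum_congr rfl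
          intro p hp
          rw [← add_smul, Nat.add_sub_cancel' (hle p hp)]
        exact (add_left_cancel key).symm
  · intro hW n
    obtain ⟨k, hk0, hkmono, hkacc, hkmem⟩ := hW
    have hksum : ∀ j, A.vecSum α 0 (k j) ∈ LinSet (0 : Fin d → ℕ) P := by
      intro j
      induction j with
      | zero =>
        rw [hk0]
        have : A.vecSum α 0 0 = 0 := by simp [DetPA.vecSum]
        rw [this]; exact linSet_zero_mem
      | succ j ih =>
        rw [← vecSum_split A α (Nat.zero_le _) (le_of_lt (hkmono (Nat.lt_succ_self j)))]
        exact linSet_add_mem ih (by rw [← hC]; exact hkmem j)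
    refine ⟨k (n + 1), le_trans (Nat.le_succ n) (hkmono.le_apply), ?_, hkacc n, ?_⟩
    · calc 1 ≤ n + 1 := Nat.succ_le_succ (Nat.zero_le n)
        _ ≤ k (n + 1) := hkmono.le_apply
    · rw [hC]; exact hksum (n + 1)
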